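/- Let F : [0,2] × [0,2] → ℝ be defined by F(a,b) = a - b if a ≥ b and b ≤ 1; F(a,b) = a - 1 if 1 < a, b ≤ 2; F(a,b) = 0 if a < b and a ≤ 1. Let a₁,…,aₙ, b₁,…,bₙ ∈ [0,2], and let σ, τ be permutations of {1,…,n} such that a_{σ(i)} ≤ a_{σ(j)} and b_{τ(i)} ≤ b_{τ(j)} whenever i < j. Then ∑_{i=1}^n F(a_{σ(i)}, b_{τ(i)}) ≤ ∑_{i=1}^n F(a_i, b_i). That is, the pairing of the sorted sequences minimizes the sum ∑ F(a_i, b_{π(i)}) over permutations π. -/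

import Mathlib

/-- The piecewise function `F` on `[0,2] × [0,2]`. -/
noncomputable def Fpw (a b : ℝ) : ℝ :=
  if b ≤ a ∧ b ≤ 1 then a - b else if 1 < a ∧ 1 < b then a - 1 else 0

set_option maxHeartbeats 1000000 in
lemma Fpw_submod {a1 a2 b1 b2 : ℝ} (ha : a1 ≤ a2) (hb : b1 ≤ b2) :
    Fpw a1 b1 + Fpw a2 b2 ≤ Fpw a1 b2 + Fpw a2 b1 := by
  unfold Fpw
  split_ifs <;> simp -failIfUnchanged only [not_and_or, not_le, not_lt] at * <;>
    (try casesm* _ ∨ _, _ ∧ _) <;> linarith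

/-- Split a sum over `univ` at two distinct points. -/
lemma sum_split_two {M : Type*} [AddCommMonoid M] {n : ℕ} (i j : Fin n) (hij : i ≠ j)
    (u : Fin n → M) :
    ∑ k, u k = u i + (u j + ∑ k ∈ (Finset.univ.erase i).erase j, u k) := by
  have hj : j ∈ Finset.univ.erase i := Finset.mem_erase.2 ⟨hij.symm, Finset.mem_univ j⟩
  rw [← Finset.add_sum_erase _ u (Finset.mem_univ i), ← Finset.add_sum_erase _ u hj]

/-- A strictly monotone permutation of `Fin n` is the identity. -/
lemma perm_id_of_strictMono {n : ℕ} (π : Equiv.Perm (Fin n))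
    (hmono : ∀ i j : Fin n, i < j → π i < π j) : ∀ i, π i = i := by
  have h1 : ∀ (ρ : Equiv.Perm (Fin n)), (∀ i j : Fin n, i < j → ρ i < ρ j) →
      ∀ i : Fin n, (i : ℕ) ≤ (ρ i : ℕ) := by
    intro ρ hρ
    have : ∀ m : ℕ, ∀ i : Fin n, (i : ℕ) ≤ m → (i : ℕ) ≤ (ρ i : ℕ) := by
      intro m
      induction m with
      | zero => intro i h; omega
      | succ m IH =>
        intro i h
        by_contra hc
        push_neg at hc
        have hlt : ρ i < i := Fin.lt_def.2 hc
        have h2 : ρ (ρ i) < ρ i := hρ _ _ hlt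
        have h3 : (ρ i : ℕ) ≤ m := by
          have := Fin.lt_def.1 hlt; omega
        have h4 := IH (ρ i) h3
        have h5 := Fin.lt_def.1 h2
        omega
    exact fun i => this i.1 i le_rfl
  have hmono' : ∀ i j : Fin n, i < j → π⁻¹ i < π⁻¹ j := by
    intro i j hij
    rcases lt_trichotomy (π⁻¹ i) (π⁻¹ j) with h | h | h
    · exact h
    · exfalso; apply absurd hij
      have : i = j := by
        have := congrArg π h; simpa using this
      simp [this]
    · exfalso
      have := hmono _ _ h
      simp at this
      exact absurd hij (not_lt.2 this.le)
  intro i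
  have hle : (i : ℕ) ≤ (π i : ℕ) := h1 π hmono i
  have hge : (i : ℕ) ≤ (π⁻¹ i : ℕ) := h1 π⁻¹ hmono' i
  have : π i ≤ π (π⁻¹ i) := by
    rcases eq_or_lt_of_le (Fin.le_def.2 hge) with h | h
    · rw [← h]
    · exact (hmono _ _ h).le
  simp at this
  have := Fin.le_def.1 this
  exact Fin.ext (le_antisymm this hle)

/-- Rearrangement: pairing two sorted sequences minimizes the sum of a submodular `Fpw`. -/
lemma key_rearrange {n : ℕ} (x g : Fin n → ℝ)
    (hx : ∀ i j : Fin n, i < j → x i ≤ x j)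
    (hg : ∀ i j : Fin n, i < j → g i ≤ g j)
    (π : Equiv.Perm (Fin n)) :
    ∑ i, Fpw (x i) (g i) ≤ ∑ i, Fpw (x (π i)) (g i) := by
  have main : ∀ k : ℕ, ∀ π : Equiv.Perm (Fin n),
      n ^ 3 - (∑ i : Fin n, (i : ℕ) * (π i : ℕ)) ≤ k →
      ∑ i, Fpw (x i) (g i) ≤ ∑ i, Fpw (x (π i)) (g i) := by
    intro k
    induction k using Nat.strong_induction_on with
    | _ k IH =>
      intro π hk
      by_cases hex : ∃ p : Fin n × Fin n, p.1 < p.2 ∧ π p.2 < π p.1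
      · obtain ⟨⟨i, j⟩, hij, hinv⟩ := hex
        have hne : i ≠ j := ne_of_lt hij
        -- measure bound
        have hlt3 : (∑ l : Fin n, (l : ℕ) * (π l : ℕ)) < n ^ 3 := by
          have hn : 0 < n := i.pos
          have hb : ∀ l ∈ Finset.univ, (l : Fin n).1 * (π l).1 ≤ (n - 1) * (n - 1) := by
            intro l _
            exact Nat.mul_le_mul (Nat.le_pred_of_lt l.isLt) (Nat.le_pred_of_lt (π l).isLt)
          calc ∑ l : Fin n, (l : ℕ) * (π l : ℕ) ≤ Finset.univ.card • ((n-1)*(n-1)) :=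
                Finset.sum_le_card_nsmul _ _ _ hb
            _ = n * ((n-1)*(n-1)) := by simp [Finset.card_univ, mul_comm]
            _ < n ^ 3 := by
                obtain ⟨m, rfl⟩ : ∃ m, n = m + 1 := ⟨n - 1, (Nat.succ_pred_eq_of_pos hn).symm⟩
                simp only [Nat.add_sub_cancel]
                ring_nf
                nlinarith
        set π' : Equiv.Perm (Fin n) := (Equiv.swap i j).trans π with hπ'
        have hπ'i : π' i = π j := by simp [hπ']
        have hπ'j : π' j = π i := by simp [hπ']
        have hπ'k : ∀ l : Fin n, l ≠ i → l ≠ j → π' l = π l := by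
          intro l h1 h2; simp [hπ', Equiv.swap_apply_of_ne_of_ne h1 h2]
        -- measure strictly increases
        have hmeas : (∑ l : Fin n, (l : ℕ) * (π l : ℕ)) < ∑ l : Fin n, (l : ℕ) * (π' l : ℕ) := by
          rw [sum_split_two i j hne (fun l => (l : ℕ) * (π l : ℕ)),
              sum_split_two i j hne (fun l => (l : ℕ) * (π' l : ℕ))]
          have hrest : ∑ l ∈ (Finset.univ.erase i).erase j, (l : ℕ) * (π l : ℕ)
              = ∑ l ∈ (Finset.univ.erase i).erase j, (l : ℕ) * (π' l : ℕ) := by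
            refine Finset.sum_congr rfl (fun l hl => ?_)
            simp only [Finset.mem_erase] at hl
            rw [hπ'k l hl.2.1 hl.1]
          rw [hπ'i, hπ'j, ← hrest]
          have h1 : (i : ℕ) < (j : ℕ) := hij
          have h2 : (π j : ℕ) < (π i : ℕ) := hinv
          have : (i:ℕ) * (π i : ℕ) + (j:ℕ) * (π j : ℕ) <
              (i:ℕ) * (π j : ℕ) + (j:ℕ) * (π i : ℕ) := by nlinarith
          omega
        -- apply the inductive hypothesis to π'
        have hIH := IH (n ^ 3 - (∑ l : Fin n, (l : ℕ) * (π' l : ℕ))) (by omega) π' le_rfl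
        refine hIH.trans ?_
        -- swap step inequality via submodularity
        rw [sum_split_two i j hne (fun l => Fpw (x (π l)) (g l)),
            sum_split_two i j hne (fun l => Fpw (x (π' l)) (g l))]
        have hrest : ∑ l ∈ (Finset.univ.erase i).erase j, Fpw (x (π' l)) (g l)
            = ∑ l ∈ (Finset.univ.erase i).erase j, Fpw (x (π l)) (g l) := by
          refine Finset.sum_congr rfl (fun l hl => ?_)
          simp only [Finset.mem_erase] at hl
          rw [hπ'k l hl.2.1 hl.1]
        rw [hπ'i, hπ'j, hrest]
        have hxle : x (π j) ≤ x (π i) := hx _ _ hinv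
        have hgle : g i ≤ g j := hg _ _ hij
        have := Fpw_submod hxle hgle
        linarith
      · push_neg at hex
        have hmono : ∀ i j : Fin n, i < j → π i < π j := by
          intro i j h
          have h1 := hex (i, j) h
          rcases lt_trichotomy (π i) (π j) with h2 | h2 | h2
          · exact h2
          · exact absurd (π.injective h2) (ne_of_lt h)
          · exact absurd h2 (not_lt.2 h1)
        have hid := perm_id_of_strictMono π hmono
        refine le_of_eq (Finset.sum_congr rfl (fun l _ => ?_))
        rw [hid l]
  exact main (n ^ 3) π (Nat.sub_le _ _)

theorem stmt1 (n : ℕ) (a b : Fin n → ℝ)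
    (ha : ∀ i, a i ∈ Set.Icc (0:ℝ) 2) (hb : ∀ i, b i ∈ Set.Icc (0:ℝ) 2)
    (σ τ : Equiv.Perm (Fin n))
    (hσ : ∀ i j : Fin n, i < j → a (σ i) ≤ a (σ j))
    (hτ : ∀ i j : Fin n, i < j → b (τ i) ≤ b (τ j)) :
    ∑ i, Fpw (a (σ i)) (b (τ i)) ≤ ∑ i, Fpw (a i) (b i) := by
  have hkey := key_rearrange (fun i => a (σ i)) (fun i => b (τ i)) hσ hτ (τ.trans σ.symm)
  have hR : ∑ i, Fpw (a i) (b i) = ∑ i, Fpw (a (τ i)) (b (τ i)) :=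
    (Equiv.sum_comp τ (fun i => Fpw (a i) (b i))).symm
  rw [hR]
  simpa using hkey
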